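/- Let μ be a probability measure on ℝ with finite second moment whose support contains at least two points, and let I_μ = (inf(supp μ), sup(supp μ)) be the interior of the smallest closed interval containing the support of μ. Define G(t,y) = (∫_ℝ u exp(uy − u²t/2) μ(du)) / (∫_ℝ exp(uy − u²t/2) μ(du)). Then for every fixed t > 0, the map y ↦ G(t,y) is a strictly increasing continuous bijection from ℝ onto I_μ. -/

import Mathlib

open MeasureTheory ProbabilityTheory Real Filter Set
open scoped ENNReal NNReal

noncomputable section

/-- The Gaussian likelihood kernel `exp(u y - u^2 t / 2)`. -/
def gker (t y u : ℝ) : ℝ := Real.exp (u * y - u ^ 2 * t / 2)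

/-- The Widder transform `F(t,y) = ∫ exp(u y - u² t/2) μ(du)` of the measure `μ`. -/
def Fw (μ : Measure ℝ) (t y : ℝ) : ℝ := ∫ u, gker t y u ∂μ

/-- The posterior-mean function `G(t,y)`. -/
def Gp (μ : Measure ℝ) (t y : ℝ) : ℝ := (∫ u, u * gker t y u ∂μ) / Fw μ t y

/-- The posterior-variance function `H(t,y)`. -/
def Hp (μ : Measure ℝ) (t y : ℝ) : ℝ :=
  (∫ u, u ^ 2 * gker t y u ∂μ) / Fw μ t y - (Gp μ t y) ^ 2

/-- The (topological) support of a measure on `ℝ`. -/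
def msupport (μ : Measure ℝ) : Set ℝ := {x | ∀ U ∈ nhds x, μ U ≠ 0}

/-- `I_μ`: the interior of the smallest closed interval containing the support of `μ`,
i.e. the open interval `(inf (supp μ), sup (supp μ))`. -/
def Imu (μ : Measure ℝ) : Set ℝ := interior (convexHull ℝ (msupport μ))

/-- The dispersion function in estimate coordinates: `Ψ(t,x) = H(t, G(t,·)⁻¹(x))`. -/
def Psi (μ : Measure ℝ) (t x : ℝ) : ℝ := Hp μ t (Function.invFun (Gp μ t) x)

/-- The natural sigma-algebra generated by the observation process `Y` up to time `t`. -/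
def natSigma {Ω : Type*} [MeasurableSpace Ω] (Y : ℝ → Ω → ℝ) (t : ℝ) : MeasurableSpace Ω :=
  ⨆ s ∈ Set.Icc (0 : ℝ) t, MeasurableSpace.comap (Y s) inferInstance

/-- The right-continuous augmentation `F^Y(t) = ⋂_{s > t} σ(Y_r, r ≤ s)`
of the filtration generated by `Y`. -/
def obsFiltration {Ω : Type*} [MeasurableSpace Ω] (Y : ℝ → Ω → ℝ) (t : ℝ) :
    MeasurableSpace Ω :=
  ⨅ s ∈ Set.Ioi t, natSigma Y s

/-- A process `W` is a standard Brownian motion under the probability measure `P`: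
it starts at `0`, has continuous paths, Gaussian increments `W t - W s ~ N(0, t - s)`,
and independent increments. -/
structure IsStdBM {Ω : Type*} [MeasurableSpace Ω] (P : Measure Ω) (W : ℝ → Ω → ℝ) : Prop where
  measurable : ∀ t : ℝ, Measurable (W t)
  init : ∀ ω, W 0 ω = 0
  cont : ∀ ω, Continuous fun t => W t ω
  incrLaw : ∀ ⦃s t : ℝ⦄, 0 ≤ s → s ≤ t →
    Measure.map (fun ω => W t ω - W s ω) P = gaussianReal 0 (Real.toNNReal (t - s))
  indepIncr : ∀ (n : ℕ) (ts : Fin (n + 1) → ℝ), Monotone ts → 0 ≤ ts 0 →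
    iIndepFun
      (fun (i : Fin n) ω => W (ts i.succ) ω - W (ts i.castSucc) ω) P

/-- A stopping time of the observation filtration `F^Y`:
`{τ ≤ t} ∈ F^Y(t)` for every `t`. -/
def IsObsStoppingTime {Ω : Type*} [MeasurableSpace Ω] (Y : ℝ → Ω → ℝ) (τ : Ω → ℝ) : Prop :=
  ∀ t : ℝ, MeasurableSet[obsFiltration Y t] {ω | τ ω ≤ t}


section Helpers

open MeasureTheory Real

variable {μ : Measure ℝ} {t : ℝ}

lemma gker_pos (t y u : ℝ) : 0 < gker t y u := Real.exp_pos _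

lemma sq_bound (ht : 0 < t) (s u : ℝ) : s * u - u ^ 2 * t / 2 ≤ s ^ 2 / (2 * t) := by
  rw [le_div_iff₀ (by linarith : (0:ℝ) < 2 * t)]
  nlinarith [sq_nonneg (s - t * u)]

lemma pow_gker_le (ht : 0 < t) (n : ℕ) {y c : ℝ} (hc : |y| ≤ c) (u : ℝ) :
    |u| ^ n * gker t y u ≤ Real.exp ((n + c) ^ 2 / (2 * t)) := by
  have h1 : |u| ^ n ≤ Real.exp ((n : ℝ) * |u|) := by
    calc |u| ^ n ≤ (Real.exp |u|) ^ n :=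
          pow_le_pow_left₀ (abs_nonneg u) (by linarith [Real.add_one_le_exp |u|]) n
      _ = Real.exp ((n : ℝ) * |u|) := by rw [← Real.exp_nat_mul]
  have h2 : gker t y u ≤ Real.exp (c * |u| - u ^ 2 * t / 2) := by
    apply Real.exp_le_exp.2
    have : u * y ≤ c * |u| := by
      calc u * y ≤ |u * y| := le_abs_self _
        _ = |u| * |y| := abs_mul u y
        _ ≤ |u| * c := mul_le_mul_of_nonneg_left hc (abs_nonneg u)
        _ = c * |u| := mul_comm _ _
    linarith
  calc |u| ^ n * gker t y u
      ≤ Real.exp ((n : ℝ) * |u|) * Real.exp (c * |u| - u ^ 2 * t / 2) :=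
        mul_le_mul h1 h2 (gker_pos t y u).le (Real.exp_nonneg _)
    _ = Real.exp (((n : ℝ) + c) * |u| - |u| ^ 2 * t / 2) := by
        rw [← Real.exp_add]; rw [sq_abs]; ring_nf
    _ ≤ Real.exp (((n : ℝ) + c) ^ 2 / (2 * t)) := Real.exp_le_exp.2 (sq_bound ht _ _)

lemma integrable_bdd {α : Type*} [MeasurableSpace α]
    (ν : Measure α) [IsFiniteMeasure ν]
    {f : α → ℝ} (hf : AEStronglyMeasurable f ν) {C : ℝ} (h : ∀ u, ‖f u‖ ≤ C) :
    Integrable f ν :=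
  (integrable_const C).mono' hf (Filter.Eventually.of_forall h)

lemma gker_continuous (t y : ℝ) : Continuous fun u => gker t y u := by
  apply Real.continuous_exp.comp; fun_prop

lemma gker_continuous_y (t u : ℝ) : Continuous fun y => gker t y u := by
  apply Real.continuous_exp.comp; fun_prop

lemma norm_pow_gker (t y u : ℝ) (n : ℕ) : ‖u ^ n * gker t y u‖ = |u| ^ n * gker t y u := by
  rw [norm_mul, Real.norm_eq_abs, Real.norm_eq_abs, abs_pow,
    abs_of_pos (gker_pos t y u)]

lemma integrable_pow_gker [IsProbabilityMeasure μ] (ht : 0 < t) (n : ℕ) (y : ℝ) :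
    Integrable (fun u => u ^ n * gker t y u) μ := by
  apply integrable_bdd μ ((continuous_pow n).mul (gker_continuous t y)).aestronglyMeasurable
    (C := Real.exp (((n : ℝ) + |y|) ^ 2 / (2 * t)))
  intro u
  show ‖u ^ n * gker t y u‖ ≤ _
  rw [norm_pow_gker]
  exact pow_gker_le ht n le_rfl u

lemma integrable_gker [IsProbabilityMeasure μ] (ht : 0 < t) (y : ℝ) :
    Integrable (fun u => gker t y u) μ := by
  simpa using integrable_pow_gker (μ := μ) ht 0 y

lemma integrable_id_gker [IsProbabilityMeasure μ] (ht : 0 < t) (y : ℝ) :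
    Integrable (fun u => u * gker t y u) μ := by
  simpa using integrable_pow_gker (μ := μ) ht 1 y

lemma Fw_pos [IsProbabilityMeasure μ] (ht : 0 < t) (y : ℝ) : 0 < Fw μ t y := by
  rw [Fw]
  rw [integral_pos_iff_support_of_nonneg (fun u => (gker_pos t y u).le) (integrable_gker ht y)]
  have : Function.support (fun u => gker t y u) = Set.univ :=
    Set.eq_univ_of_forall fun u => (gker_pos t y u).ne'
  rw [this]
  simp

lemma Fw_continuous [IsProbabilityMeasure μ] (ht : 0 < t) (n : ℕ) :
    Continuous fun y => ∫ u, u ^ n * gker t y u ∂μ := by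
  rw [continuous_iff_continuousAt]
  intro y₀
  apply MeasureTheory.continuousAt_of_dominated
    (bound := fun _ => Real.exp (((n : ℝ) + (|y₀| + 1)) ^ 2 / (2 * t)))
  · exact Filter.Eventually.of_forall fun y =>
      Continuous.aestronglyMeasurable ((continuous_pow n).mul (gker_continuous t y))
  · filter_upwards [Metric.ball_mem_nhds y₀ one_pos] with y hy
    apply Filter.Eventually.of_forall
    intro u
    rw [norm_pow_gker]
    apply pow_gker_le ht n _ u
    have h1 : |y - y₀| < 1 := by simpa [Real.dist_eq] using hy
    calc |y| = |y - y₀ + y₀| := by ring_nf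
      _ ≤ |y - y₀| + |y₀| := abs_add_le _ _
      _ ≤ |y₀| + 1 := by linarith
  · exact integrable_const _
  · exact Filter.Eventually.of_forall fun u =>
      Continuous.continuousAt (continuous_const.mul (gker_continuous_y t u))

lemma Gp_continuous [IsProbabilityMeasure μ] (ht : 0 < t) : Continuous (Gp μ t) := by
  have h1 : Continuous fun y => ∫ u, u * gker t y u ∂μ := by
    have := Fw_continuous (μ := μ) ht 1
    simpa using this
  have h0 : Continuous fun y => Fw μ t y := by
    have := Fw_continuous (μ := μ) ht 0
    simpa [Fw] using this
  exact h1.div h0 fun y => (Fw_pos ht y).ne'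


lemma integral_pos_of_pos_on {α : Type*} [MeasurableSpace α] (ν : Measure α)
    [IsFiniteMeasure ν] {f : α → ℝ} (hf : Integrable f ν) (h0 : 0 ≤ᵐ[ν] f)
    {s : Set α} (hs : MeasurableSet s) (hνs : ν s ≠ 0) {ε : ℝ} (hε : 0 < ε)
    (hb : ∀ x ∈ s, ε ≤ f x) : 0 < ∫ x, f x ∂ν := by
  have h1 : ε * (ν s).toReal ≤ ∫ x in s, f x ∂ν :=
    setIntegral_ge_of_const_le_real hs (measure_ne_top ν s) hb hf.integrableOn
  have h2 : ∫ x in s, f x ∂ν ≤ ∫ x, f x ∂ν :=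
    integral_mono_measure Measure.restrict_le_self h0 hf
  have h3 : 0 < (ν s).toReal := ENNReal.toReal_pos hνs (measure_ne_top ν s)
  nlinarith

lemma msupport_mem_nhds_ne {x : ℝ} (hx : x ∈ msupport μ) {U : Set ℝ} (hU : U ∈ nhds x) :
    μ U ≠ 0 := hx U hU

/-- A kernel identity: tilting. -/
lemma gker_tilt (t y₁ y₂ u : ℝ) : gker t y₂ u = gker t y₁ u * Real.exp (u * (y₂ - y₁)) := by
  rw [gker, gker, ← Real.exp_add]
  congr 1
  ring

lemma Gp_strictMonoAux [IsProbabilityMeasure μ] (ht : 0 < t)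
    {a b : ℝ} (ha : a ∈ msupport μ) (hb : b ∈ msupport μ) (hab : a < b)
    {y₁ y₂ : ℝ} (hy : y₁ < y₂) : Gp μ t y₁ < Gp μ t y₂ := by
  set δ := y₂ - y₁ with hδdef
  have hδ : 0 < δ := by simp [hδdef]; linarith
  set N₁ := ∫ u, u * gker t y₁ u ∂μ
  set N₂ := ∫ u, u * gker t y₂ u ∂μ
  set D₁ := Fw μ t y₁
  set D₂ := Fw μ t y₂
  have hD₁ : 0 < D₁ := Fw_pos ht y₁
  have hD₂ : 0 < D₂ := Fw_pos ht y₂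
  -- the symmetrized covariance integrand
  set Φ : ℝ × ℝ → ℝ := fun p =>
    (p.1 - p.2) * (Real.exp (p.1 * δ) - Real.exp (p.2 * δ)) * (gker t y₁ p.1 * gker t y₁ p.2)
    with hΦdef
  have hΦeq : Φ = fun p : ℝ × ℝ =>
      (p.1 * gker t y₂ p.1) * gker t y₁ p.2 - (p.1 * gker t y₁ p.1) * gker t y₂ p.2
      - gker t y₂ p.1 * (p.2 * gker t y₁ p.2) + gker t y₁ p.1 * (p.2 * gker t y₂ p.2) := by
    funext p
    rw [hΦdef]
    simp only
    rw [gker_tilt t y₁ y₂ p.1, gker_tilt t y₁ y₂ p.2]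
    ring
  have hi2 : Integrable (fun u => u * gker t y₂ u) μ := integrable_id_gker ht y₂
  have hi1 : Integrable (fun u => u * gker t y₁ u) μ := integrable_id_gker ht y₁
  have hg1 : Integrable (fun u => gker t y₁ u) μ := integrable_gker ht y₁
  have hg2 : Integrable (fun u => gker t y₂ u) μ := integrable_gker ht y₂
  have hΦint : Integrable Φ (μ.prod μ) := by
    rw [hΦeq]
    exact (((hi2.mul_prod hg1).sub (hi1.mul_prod hg2)).sub (hg2.mul_prod hi1)).add
      (hg1.mul_prod hi2)
  have hA : Integrable (fun p : ℝ × ℝ => (p.1 * gker t y₂ p.1) * gker t y₁ p.2) (μ.prod μ) :=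
    hi2.mul_prod hg1
  have hB : Integrable (fun p : ℝ × ℝ => (p.1 * gker t y₁ p.1) * gker t y₂ p.2) (μ.prod μ) :=
    hi1.mul_prod hg2
  have hC : Integrable (fun p : ℝ × ℝ => gker t y₂ p.1 * (p.2 * gker t y₁ p.2)) (μ.prod μ) :=
    hg2.mul_prod hi1
  have hD : Integrable (fun p : ℝ × ℝ => gker t y₁ p.1 * (p.2 * gker t y₂ p.2)) (μ.prod μ) :=
    hg1.mul_prod hi2
  have hΦval : ∫ p, Φ p ∂(μ.prod μ) = 2 * (N₂ * D₁ - N₁ * D₂) := by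
    have e1 : ∫ p : ℝ × ℝ, (p.1 * gker t y₂ p.1) * gker t y₁ p.2 ∂(μ.prod μ) = N₂ * D₁ :=
      integral_prod_mul (fun u => u * gker t y₂ u) (fun v => gker t y₁ v)
    have e2 : ∫ p : ℝ × ℝ, (p.1 * gker t y₁ p.1) * gker t y₂ p.2 ∂(μ.prod μ) = N₁ * D₂ :=
      integral_prod_mul (fun u => u * gker t y₁ u) (fun v => gker t y₂ v)
    have e3 : ∫ p : ℝ × ℝ, gker t y₂ p.1 * (p.2 * gker t y₁ p.2) ∂(μ.prod μ) = D₂ * N₁ :=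
      integral_prod_mul (fun u => gker t y₂ u) (fun v => v * gker t y₁ v)
    have e4 : ∫ p : ℝ × ℝ, gker t y₁ p.1 * (p.2 * gker t y₂ p.2) ∂(μ.prod μ) = D₁ * N₂ :=
      integral_prod_mul (fun u => gker t y₁ u) (fun v => v * gker t y₂ v)
    calc ∫ p, Φ p ∂(μ.prod μ)
        = ∫ p : ℝ × ℝ, ((p.1 * gker t y₂ p.1) * gker t y₁ p.2
            - (p.1 * gker t y₁ p.1) * gker t y₂ p.2)
            - (gker t y₂ p.1 * (p.2 * gker t y₁ p.2)
            - gker t y₁ p.1 * (p.2 * gker t y₂ p.2)) ∂(μ.prod μ) := by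
          rw [hΦeq]; congr 1; funext p; ring
      _ = (∫ p : ℝ × ℝ, (p.1 * gker t y₂ p.1) * gker t y₁ p.2
            - (p.1 * gker t y₁ p.1) * gker t y₂ p.2 ∂(μ.prod μ))
            - ∫ p : ℝ × ℝ, gker t y₂ p.1 * (p.2 * gker t y₁ p.2)
            - gker t y₁ p.1 * (p.2 * gker t y₂ p.2) ∂(μ.prod μ) :=
          integral_sub (hA.sub hB) (hC.sub hD)
      _ = ((∫ p : ℝ × ℝ, (p.1 * gker t y₂ p.1) * gker t y₁ p.2 ∂(μ.prod μ))
            - ∫ p : ℝ × ℝ, (p.1 * gker t y₁ p.1) * gker t y₂ p.2 ∂(μ.prod μ))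
            - ((∫ p : ℝ × ℝ, gker t y₂ p.1 * (p.2 * gker t y₁ p.2) ∂(μ.prod μ))
            - ∫ p : ℝ × ℝ, gker t y₁ p.1 * (p.2 * gker t y₂ p.2) ∂(μ.prod μ)) := by
          rw [integral_sub hA hB, integral_sub hC hD]
      _ = 2 * (N₂ * D₁ - N₁ * D₂) := by rw [e1, e2, e3, e4]; ring
  have hΦnn : 0 ≤ᵐ[μ.prod μ] Φ := by
    apply Filter.Eventually.of_forall
    rintro ⟨u, v⟩
    rw [hΦdef]
    simp only
    apply mul_nonneg _ (mul_nonneg (gker_pos _ _ _).le (gker_pos _ _ _).le)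
    rcases le_total v u with h | h
    · have : Real.exp (v * δ) ≤ Real.exp (u * δ) :=
        Real.exp_le_exp.2 (mul_le_mul_of_nonneg_right h hδ.le)
      nlinarith
    · have : Real.exp (u * δ) ≤ Real.exp (v * δ) :=
        Real.exp_le_exp.2 (mul_le_mul_of_nonneg_right h hδ.le)
      nlinarith
  -- positivity on a box around (a, b)
  set r := (b - a) / 4 with hrdef
  have hr : 0 < r := by rw [hrdef]; linarith
  set A := Set.Ioo (a - r) (a + r)
  set B := Set.Ioo (b - r) (b + r)
  have hμA : μ A ≠ 0 := msupport_mem_nhds_ne ha (Ioo_mem_nhds (by linarith) (by linarith))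
  have hμB : μ B ≠ 0 := msupport_mem_nhds_ne hb (Ioo_mem_nhds (by linarith) (by linarith))
  set R := |a| + |b| + r with hRdef
  have habs : ∀ w : ℝ, w ∈ A ∪ B → |w| ≤ R := by
    rintro w (hw | hw)
    · obtain ⟨hw1, hw2⟩ : a - r < w ∧ w < a + r := hw
      rw [abs_le, hRdef]
      constructor
      · have := neg_abs_le a; have := abs_nonneg b; linarith
      · have := le_abs_self a; have := abs_nonneg b; linarith
    · obtain ⟨hw1, hw2⟩ : b - r < w ∧ w < b + r := hw
      rw [abs_le, hRdef]
      constructor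
      · have := neg_abs_le b; have := abs_nonneg a; linarith
      · have := le_abs_self b; have := abs_nonneg a; linarith
  set klow := Real.exp (-(R * |y₁| + R ^ 2 * t / 2)) with hklowdef
  have hklow : ∀ w : ℝ, w ∈ A ∪ B → klow ≤ gker t y₁ w := by
    intro w hw
    have h1 : |w| ≤ R := habs w hw
    have hR0 : 0 ≤ R := le_trans (abs_nonneg w) h1
    apply Real.exp_le_exp.2
    have e1 : -(R * |y₁|) ≤ w * y₁ := by
      have : |w * y₁| ≤ R * |y₁| := by
        rw [abs_mul]; exact mul_le_mul_of_nonneg_right h1 (abs_nonneg y₁)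
      have := neg_abs_le (w * y₁)
      linarith
    have e2 : w ^ 2 ≤ R ^ 2 := by
      rw [← sq_abs w]
      exact pow_le_pow_left₀ (abs_nonneg w) h1 2
    have h5 : w ^ 2 * t ≤ R ^ 2 * t := mul_le_mul_of_nonneg_right e2 ht.le
    clear_value R
    linarith
  set m := Real.exp ((b - r) * δ) - Real.exp ((a + r) * δ) with hmdef
  have hm : 0 < m := by
    rw [hmdef]
    have : (a + r) * δ < (b - r) * δ := by
      apply mul_lt_mul_of_pos_right _ hδ
      rw [hrdef]; linarith
    have := Real.exp_lt_exp.2 this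
    linarith
  set ε := ((b - a) / 2) * m * (klow * klow) with hεdef
  have hklow0 : 0 < klow := Real.exp_pos _
  have hε : 0 < ε := by
    rw [hεdef]
    apply mul_pos (mul_pos (by linarith) hm) (mul_pos hklow0 hklow0)
  have hbox : ∀ p ∈ A ×ˢ B, ε ≤ Φ p := by
    rintro ⟨u, v⟩ hp
    rw [Set.mem_prod] at hp
    obtain ⟨hu, hv⟩ := hp
    have hu' : a - r < u ∧ u < a + r := hu
    have hv' : b - r < v ∧ v < b + r := hv
    obtain ⟨hu1, hu2⟩ := hu'
    obtain ⟨hv1, hv2⟩ := hv' 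
    have h1 : (b - a) / 2 ≤ v - u := by rw [hrdef] at hu2 hv1; linarith
    have h2 : m ≤ Real.exp (v * δ) - Real.exp (u * δ) := by
      rw [hmdef]
      have e1 : Real.exp ((b - r) * δ) ≤ Real.exp (v * δ) :=
        Real.exp_le_exp.2 (mul_le_mul_of_nonneg_right hv1.le hδ.le)
      have e2 : Real.exp (u * δ) ≤ Real.exp ((a + r) * δ) :=
        Real.exp_le_exp.2 (mul_le_mul_of_nonneg_right hu2.le hδ.le)
      linarith
    have h3 : klow ≤ gker t y₁ u := hklow u (Set.mem_union_left _ hu)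
    have h4 : klow ≤ gker t y₁ v := hklow v (Set.mem_union_right _ hv)
    have hΦval : Φ (u, v) =
        ((v - u) * (Real.exp (v * δ) - Real.exp (u * δ))) * (gker t y₁ u * gker t y₁ v) := by
      rw [hΦdef]; ring
    rw [hΦval, hεdef]
    have hg1p := (gker_pos t y₁ u).le
    have hg2p := (gker_pos t y₁ v).le
    apply mul_le_mul
    · apply mul_le_mul h1 h2 hm.le (by linarith)
    · apply mul_le_mul h3 h4 hklow0.le hg1p
    · exact mul_pos hklow0 hklow0 |>.le
    · apply mul_nonneg (by linarith) (by linarith [hm.le, h2])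
  have hI : 0 < ∫ p, Φ p ∂(μ.prod μ) := by
    apply integral_pos_of_pos_on (μ.prod μ) hΦint hΦnn
      (measurableSet_Ioo.prod measurableSet_Ioo) _ hε hbox
    rw [Measure.prod_prod]
    exact mul_ne_zero hμA hμB
  rw [hΦval] at hI
  rw [Gp, Gp, div_lt_div_iff₀ hD₁ hD₂]
  show N₁ * D₂ < N₂ * D₁
  linarith

lemma Gp_strictMono [IsProbabilityMeasure μ] (ht : 0 < t)
    {a b : ℝ} (ha : a ∈ msupport μ) (hb : b ∈ msupport μ) (hab : a < b) :
    StrictMono (Gp μ t) := fun _ _ hy => Gp_strictMonoAux ht ha hb hab hy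


lemma msupport_compl_null (μ : Measure ℝ) : μ (msupport μ)ᶜ = 0 := by
  obtain ⟨T, hTc, hTS, hT⟩ := TopologicalSpace.isOpen_sUnion_countable
    {V : Set ℝ | IsOpen V ∧ μ V = 0} (fun s hs => hs.1)
  have h1 : (msupport μ)ᶜ ⊆ ⋃₀ {V : Set ℝ | IsOpen V ∧ μ V = 0} := by
    intro x hx
    have hx' : ¬ ∀ U ∈ nhds x, μ U ≠ 0 := hx
    push_neg at hx'
    obtain ⟨U, hU, hU0⟩ := hx'
    exact ⟨interior U, ⟨isOpen_interior, measure_mono_null interior_subset hU0⟩,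
      mem_interior_iff_mem_nhds.2 hU⟩
  refine measure_mono_null h1 ?_
  rw [← hT]
  exact (measure_sUnion_null_iff hTc).2 fun s hs => (hTS hs).2

lemma ae_mem_msupport (μ : Measure ℝ) : ∀ᵐ u ∂μ, u ∈ msupport μ :=
  mem_ae_iff.2 (msupport_compl_null μ)

lemma neg_mem_msupport_map (μ : Measure ℝ) {q : ℝ} (hq : q ∈ msupport μ) :
    -q ∈ msupport (Measure.map (fun u : ℝ => -u) μ) := by
  intro U hU
  obtain ⟨V, hVU, hV, hqV⟩ := mem_nhds_iff.1 hU
  have hpre : (fun u : ℝ => -u) ⁻¹' V ∈ nhds q := by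
    apply ContinuousAt.preimage_mem_nhds continuous_neg.continuousAt
    simpa using hV.mem_nhds hqV
  have h0 : μ ((fun u : ℝ => -u) ⁻¹' V) ≠ 0 := hq _ hpre
  intro hU0
  apply h0
  have hV0 : Measure.map (fun u : ℝ => -u) μ V = 0 := measure_mono_null hVU hU0
  rwa [Measure.map_apply measurable_neg hV.measurableSet] at hV0

lemma msupport_map_neg (μ : Measure ℝ) {p : ℝ}
    (hp : p ∈ msupport (Measure.map (fun u : ℝ => -u) μ)) : -p ∈ msupport μ := by
  have h := neg_mem_msupport_map (Measure.map (fun u : ℝ => -u) μ) hp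
  rwa [Measure.map_map measurable_neg measurable_neg,
    show ((fun u : ℝ => -u) ∘ fun u : ℝ => -u) = id by funext u; simp,
    Measure.map_id] at h

lemma Gp_map_neg (μ : Measure ℝ) [IsProbabilityMeasure μ] {t : ℝ} (ht : 0 < t) (y : ℝ) :
    Gp (Measure.map (fun u : ℝ => -u) μ) t y = - Gp μ t (-y) := by
  have hmeas : AEMeasurable (fun u : ℝ => -u) μ := measurable_neg.aemeasurable
  have h1 : ∫ u, u * gker t y u ∂(Measure.map (fun u : ℝ => -u) μ)
      = ∫ x, (-x) * gker t y (-x) ∂μ :=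
    integral_map hmeas (Continuous.aestronglyMeasurable
      (continuous_id.mul (gker_continuous t y)))
  have h2 : Fw (Measure.map (fun u : ℝ => -u) μ) t y = Fw μ t (-y) := by
    rw [Fw, Fw, integral_map hmeas (Continuous.aestronglyMeasurable (gker_continuous t y))]
    congr 1
    funext x
    rw [gker, gker]
    congr 1
    ring
  have h3 : (fun x : ℝ => (-x) * gker t y (-x)) = fun x => -(x * gker t (-y) x) := by
    funext x
    rw [gker, gker, show (-x) * y - (-x) ^ 2 * t / 2 = x * (-y) - x ^ 2 * t / 2 by ring]
    ring
  rw [Gp, Gp, h1, h2, h3, integral_neg, neg_div]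

lemma exists_Gp_gt {μ : Measure ℝ} [IsProbabilityMeasure μ] {t : ℝ} (ht : 0 < t)
    (hμ1 : Integrable (fun u => |u|) μ) {c p : ℝ} (hp : p ∈ msupport μ) (hcp : c < p) :
    ∃ y : ℝ, c < Gp μ t y := by
  obtain ⟨d, hd⟩ : ∃ x : ℝ, x = p - c := ⟨_, rfl⟩
  have hd0 : 0 < d := by rw [hd]; linarith
  obtain ⟨c₂, hc₂⟩ : ∃ x : ℝ, x = c + d / 3 := ⟨_, rfl⟩
  obtain ⟨c₃, hc₃⟩ : ∃ x : ℝ, x = c + 2 * d / 3 := ⟨_, rfl⟩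
  have hcc₂ : c < c₂ := by rw [hc₂]; linarith
  have hc₂c₃ : c₂ < c₃ := by rw [hc₂, hc₃]; linarith
  have hc₃p : c₃ < p := by rw [hc₃, hd]; linarith
  obtain ⟨J, hJ⟩ : ∃ s : Set ℝ, s = Set.Ioo c₃ (p + 1) := ⟨_, rfl⟩
  have hμJ : μ J ≠ 0 := by
    rw [hJ]
    exact hp _ (Ioo_mem_nhds hc₃p (by linarith))
  obtain ⟨m, hm⟩ : ∃ x : ℝ, x = (μ J).toReal := ⟨_, rfl⟩
  have hm0 : 0 < m := by rw [hm]; exact ENNReal.toReal_pos hμJ (measure_ne_top μ J)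
  obtain ⟨R, hR⟩ : ∃ x : ℝ, x = |c₃| + |p| + 1 := ⟨_, rfl⟩
  obtain ⟨A, hA⟩ : ∃ x : ℝ, x = ∫ u, |u| + |c| ∂μ := ⟨_, rfl⟩
  have hAint : Integrable (fun u => |u| + |c|) μ := hμ1.add (integrable_const _)
  have htend : Filter.Tendsto
      (fun y : ℝ => ((c₃ - c) * m * Real.exp (-(R ^ 2) * t / 2)) * Real.exp ((c₃ - c₂) * y))
      Filter.atTop Filter.atTop := by
    apply Filter.Tendsto.const_mul_atTop
      (mul_pos (mul_pos (by linarith) hm0) (Real.exp_pos _))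
    exact Real.tendsto_exp_atTop.comp
      (Filter.Tendsto.const_mul_atTop (by linarith) Filter.tendsto_id)
  obtain ⟨y, hy0, hygt⟩ : ∃ y : ℝ, 0 ≤ y ∧
      A < ((c₃ - c) * m * Real.exp (-(R ^ 2) * t / 2)) * Real.exp ((c₃ - c₂) * y) := by
    obtain ⟨y, h1, h2⟩ := ((htend.eventually_gt_atTop A).and (Filter.eventually_ge_atTop 0)).exists
    exact ⟨y, h2, h1⟩
  refine ⟨y, ?_⟩
  have hker_int : Integrable (fun u => (u - c) * gker t y u) μ := by
    have he : (fun u => (u - c) * gker t y u)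
        = fun u => u * gker t y u - c * gker t y u := by funext u; ring
    rw [he]
    exact (integrable_id_gker ht y).sub ((integrable_gker ht y).const_mul c)
  have hsplit : ∫ u, (u - c) * gker t y u ∂μ
      = (∫ u in Set.Iic c₂, (u - c) * gker t y u ∂μ)
        + ∫ u in Set.Ioi c₂, (u - c) * gker t y u ∂μ := by
    rw [← Set.compl_Iic]
    exact (integral_add_compl measurableSet_Iic hker_int).symm
  have hneg : -(A * Real.exp (c₂ * y)) ≤ ∫ u in Set.Iic c₂, (u - c) * gker t y u ∂μ := by
    have habs : |∫ u in Set.Iic c₂, (u - c) * gker t y u ∂μ| ≤ A * Real.exp (c₂ * y) := by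
      have step1 : |∫ u in Set.Iic c₂, (u - c) * gker t y u ∂μ|
          ≤ ∫ u in Set.Iic c₂, |u - c| * |gker t y u| ∂μ := by
        have := norm_integral_le_integral_norm (μ := μ.restrict (Set.Iic c₂))
          (fun u => (u - c) * gker t y u)
        simpa [Real.norm_eq_abs] using this
      have step2 : ∫ u in Set.Iic c₂, |u - c| * |gker t y u| ∂μ
          ≤ ∫ u in Set.Iic c₂, (|u| + |c|) * Real.exp (c₂ * y) ∂μ := by
        apply integral_mono_of_nonneg
          (Filter.Eventually.of_forall fun u => mul_nonneg (abs_nonneg _) (abs_nonneg _))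
          ((hAint.mul_const _).integrableOn)
        filter_upwards [ae_restrict_mem measurableSet_Iic] with u hu
        have huc : u ≤ c₂ := hu
        have e1 : |u - c| ≤ |u| + |c| := abs_sub u c
        have e2 : gker t y u ≤ Real.exp (c₂ * y) := by
          apply Real.exp_le_exp.2
          have : u * y ≤ c₂ * y := mul_le_mul_of_nonneg_right huc hy0
          nlinarith [sq_nonneg u]
        rw [abs_of_pos (gker_pos t y u)]
        apply mul_le_mul e1 e2 (gker_pos t y u).le (by positivity)
      have step3 : ∫ u in Set.Iic c₂, (|u| + |c|) * Real.exp (c₂ * y) ∂μ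
          ≤ ∫ u, (|u| + |c|) * Real.exp (c₂ * y) ∂μ :=
        setIntegral_le_integral (hAint.mul_const _)
          (Filter.Eventually.of_forall fun u => by positivity)
      have step4 : ∫ u, (|u| + |c|) * Real.exp (c₂ * y) ∂μ = A * Real.exp (c₂ * y) := by
        rw [integral_mul_const, hA]
      linarith
    have := neg_abs_le (∫ u in Set.Iic c₂, (u - c) * gker t y u ∂μ)
    linarith
  obtain ⟨κ, hκ⟩ : ∃ x : ℝ, x = (c₃ - c) * Real.exp (c₃ * y - R ^ 2 * t / 2) := ⟨_, rfl⟩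
  have hpos : κ * m ≤ ∫ u in Set.Ioi c₂, (u - c) * gker t y u ∂μ := by
    have h1 : κ * m ≤ ∫ u in J, (u - c) * gker t y u ∂μ := by
      rw [hm]
      apply setIntegral_ge_of_const_le_real (by rw [hJ]; exact measurableSet_Ioo)
        (measure_ne_top μ J) _ hker_int.integrableOn
      intro u hu
      rw [hJ] at hu
      have hu1 : c₃ < u := hu.1
      have hu2 : u < p + 1 := hu.2
      have habsu : |u| ≤ R := by
        rw [abs_le, hR]
        constructor
        · have := neg_abs_le c₃; have := abs_nonneg p; linarith
        · have := le_abs_self p; have := abs_nonneg c₃; linarith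
      have e1 : Real.exp (c₃ * y - R ^ 2 * t / 2) ≤ gker t y u := by
        apply Real.exp_le_exp.2
        have i1 : c₃ * y ≤ u * y := mul_le_mul_of_nonneg_right hu1.le hy0
        have i2 : u ^ 2 ≤ R ^ 2 := by
          rw [← sq_abs u]
          exact pow_le_pow_left₀ (abs_nonneg u) habsu 2
        have i3 : u ^ 2 * t ≤ R ^ 2 * t := mul_le_mul_of_nonneg_right i2 ht.le
        linarith
      rw [hκ]
      apply mul_le_mul (by linarith) e1 (Real.exp_pos _).le (by linarith)
    have h2 : ∫ u in J, (u - c) * gker t y u ∂μ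
        ≤ ∫ u in Set.Ioi c₂, (u - c) * gker t y u ∂μ := by
      apply setIntegral_mono_set hker_int.integrableOn
      · filter_upwards [ae_restrict_mem measurableSet_Ioi] with u hu
        have : c₂ < u := hu
        have := gker_pos t y u
        have : (0:ℝ) ≤ u - c := by linarith
        positivity
      · apply HasSubset.Subset.eventuallyLE
        rw [hJ]
        intro u hu
        exact lt_trans hc₂c₃ hu.1
    linarith
  have hkey : A * Real.exp (c₂ * y) < κ * m := by
    have hE : Real.exp (-(R ^ 2) * t / 2) * Real.exp ((c₃ - c₂) * y) * Real.exp (c₂ * y)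
        = Real.exp (c₃ * y - R ^ 2 * t / 2) := by
      rw [← Real.exp_add, ← Real.exp_add]
      congr 1
      ring
    calc A * Real.exp (c₂ * y)
        < ((c₃ - c) * m * Real.exp (-(R ^ 2) * t / 2)) * Real.exp ((c₃ - c₂) * y)
          * Real.exp (c₂ * y) := by
          apply mul_lt_mul_of_pos_right hygt (Real.exp_pos _)
      _ = κ * m := by rw [hκ, ← hE]; ring
  have hAexp : 0 ≤ A * Real.exp (c₂ * y) := by
    have : 0 ≤ A := by
      rw [hA]
      exact integral_nonneg fun u => by positivity
    positivity
  have htotal : 0 < ∫ u, (u - c) * gker t y u ∂μ := by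
    rw [hsplit]
    linarith
  have hD := Fw_pos (μ := μ) ht y
  rw [Gp, lt_div_iff₀ hD]
  have hsub : ∫ u, (u - c) * gker t y u ∂μ
      = (∫ u, u * gker t y u ∂μ) - c * Fw μ t y := by
    have he : (fun u => (u - c) * gker t y u)
        = fun u => u * gker t y u - c * gker t y u := by funext u; ring
    rw [he, integral_sub (integrable_id_gker ht y) ((integrable_gker ht y).const_mul c),
      integral_const_mul, Fw]
  linarith

lemma exists_Gp_lt {μ : Measure ℝ} [IsProbabilityMeasure μ] {t : ℝ} (ht : 0 < t)
    (hμ1 : Integrable (fun u => |u|) μ) {c q : ℝ} (hq : q ∈ msupport μ) (hqc : q < c) :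
    ∃ y : ℝ, Gp μ t y < c := by
  have hprob : IsProbabilityMeasure (Measure.map (fun u : ℝ => -u) μ) :=
    Measure.isProbabilityMeasure_map measurable_neg.aemeasurable
  have hν1 : Integrable (fun u => |u|) (Measure.map (fun u : ℝ => -u) μ) := by
    rw [integrable_map_measure continuous_abs.aestronglyMeasurable measurable_neg.aemeasurable]
    have he : (abs ∘ Neg.neg : ℝ → ℝ) = fun u => |u| := by funext u; simp
    rwa [he]
  have hmem : -q ∈ msupport (Measure.map (fun u : ℝ => -u) μ) := neg_mem_msupport_map μ hq
  obtain ⟨y, hy⟩ := exists_Gp_gt ht hν1 hmem (by linarith : -c < -q)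
  refine ⟨-y, ?_⟩
  rw [Gp_map_neg μ ht y] at hy
  linarith

lemma exists_msupport_gt_Gp {μ : Measure ℝ} [IsProbabilityMeasure μ] {t : ℝ} (ht : 0 < t)
    {a b : ℝ} (ha : a ∈ msupport μ) (hb : b ∈ msupport μ) (hab : a < b) (y : ℝ) :
    ∃ p ∈ msupport μ, Gp μ t y < p := by
  by_contra hcon
  push_neg at hcon
  obtain ⟨G, hG⟩ : ∃ x : ℝ, x = Gp μ t y := ⟨_, rfl⟩
  have hbG : b ≤ G := by rw [hG]; exact hcon b hb
  obtain ⟨δ, hδ⟩ : ∃ x : ℝ, x = (b - a) / 2 := ⟨_, rfl⟩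
  have hδ0 : 0 < δ := by rw [hδ]; linarith
  obtain ⟨R, hR⟩ : ∃ x : ℝ, x = |a| + δ := ⟨_, rfl⟩
  obtain ⟨klow, hklow⟩ : ∃ x : ℝ, x = Real.exp (-(R * |y| + R ^ 2 * t / 2)) := ⟨_, rfl⟩
  have hklow0 : 0 < klow := by rw [hklow]; exact Real.exp_pos _
  have hint : Integrable (fun u => (G - u) * gker t y u) μ := by
    have he : (fun u => (G - u) * gker t y u)
        = fun u => G * gker t y u - u * gker t y u := by funext u; ring
    rw [he]
    exact ((integrable_gker ht y).const_mul G).sub (integrable_id_gker ht y)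
  have hf0 : 0 ≤ᵐ[μ] fun u => (G - u) * gker t y u := by
    filter_upwards [ae_mem_msupport μ] with u hu
    have h1 : u ≤ G := by rw [hG]; exact hcon u hu
    have h2 := gker_pos t y u
    show (0:ℝ) ≤ (G - u) * gker t y u
    nlinarith
  have hμA : μ (Set.Ioo (a - δ) (a + δ)) ≠ 0 :=
    ha _ (Ioo_mem_nhds (by linarith) (by linarith))
  have hpos : 0 < ∫ u, (G - u) * gker t y u ∂μ := by
    apply integral_pos_of_pos_on μ hint hf0 measurableSet_Ioo hμA
      (ε := δ * klow) (mul_pos hδ0 hklow0)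
    intro u hu
    have hu1 : a - δ < u := hu.1
    have hu2 : u < a + δ := hu.2
    have h1 : δ ≤ G - u := by rw [hδ] at hu2 ⊢; linarith
    have habsu : |u| ≤ R := by
      rw [abs_le, hR]
      constructor
      · have := neg_abs_le a; linarith
      · have := le_abs_self a; linarith
    have h2 : klow ≤ gker t y u := by
      rw [hklow]
      apply Real.exp_le_exp.2
      have e1 : -(R * |y|) ≤ u * y := by
        have h3 : |u * y| ≤ R * |y| := by
          rw [abs_mul]
          exact mul_le_mul_of_nonneg_right habsu (abs_nonneg y)
        have := neg_abs_le (u * y)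
        linarith
      have e2 : u ^ 2 ≤ R ^ 2 := by
        rw [← sq_abs u]
        exact pow_le_pow_left₀ (abs_nonneg u) habsu 2
      have e3 : u ^ 2 * t ≤ R ^ 2 * t := mul_le_mul_of_nonneg_right e2 ht.le
      linarith
    exact mul_le_mul h1 h2 hklow0.le (by linarith)
  have hD := Fw_pos (μ := μ) ht y
  have hsub : ∫ u, (G - u) * gker t y u ∂μ
      = G * Fw μ t y - ∫ u, u * gker t y u ∂μ := by
    have he : (fun u => (G - u) * gker t y u)
        = fun u => G * gker t y u - u * gker t y u := by funext u; ring
    rw [he, integral_sub ((integrable_gker ht y).const_mul G) (integrable_id_gker ht y),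
      integral_const_mul, Fw]
  have : Gp μ t y < G := by
    rw [Gp, div_lt_iff₀ hD]
    linarith
  rw [← hG] at this
  exact lt_irrefl G this

lemma exists_msupport_lt_Gp {μ : Measure ℝ} [IsProbabilityMeasure μ] {t : ℝ} (ht : 0 < t)
    {a b : ℝ} (ha : a ∈ msupport μ) (hb : b ∈ msupport μ) (hab : a < b) (y : ℝ) :
    ∃ p ∈ msupport μ, p < Gp μ t y := by
  have hprob : IsProbabilityMeasure (Measure.map (fun u : ℝ => -u) μ) :=
    Measure.isProbabilityMeasure_map measurable_neg.aemeasurable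
  obtain ⟨p, hp, hp'⟩ := exists_msupport_gt_Gp (μ := Measure.map (fun u : ℝ => -u) μ) ht
    (neg_mem_msupport_map μ hb) (neg_mem_msupport_map μ ha) (by linarith) (-y)
  refine ⟨-p, msupport_map_neg μ hp, ?_⟩
  rw [Gp_map_neg μ ht (-y), neg_neg] at hp'
  linarith

lemma mem_Imu_of_between {μ : Measure ℝ} {x p q : ℝ} (hp : p ∈ msupport μ)
    (hq : q ∈ msupport μ) (h1 : p < x) (h2 : x < q) : x ∈ Imu μ := by
  have hsub : Set.Ioo p q ⊆ convexHull ℝ (msupport μ) := by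
    intro z hz
    have hz' : z ∈ segment ℝ p q := by
      rw [segment_eq_Icc (le_of_lt (lt_trans h1 h2))]
      exact Set.Ioo_subset_Icc_self hz
    exact segment_subset_convexHull hp hq hz'
  exact interior_maximal hsub isOpen_Ioo ⟨h1, h2⟩

lemma exists_gt_of_mem_Imu {μ : Measure ℝ} {x : ℝ} (hx : x ∈ Imu μ) :
    ∃ q ∈ msupport μ, x < q := by
  by_contra h
  push_neg at h
  have hsub : msupport μ ⊆ Set.Iic x := fun q hq => h q hq
  have h2 : convexHull ℝ (msupport μ) ⊆ Set.Iic x := convexHull_min hsub (convex_Iic x)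
  have h3 := interior_mono h2 hx
  rw [interior_Iic] at h3
  exact lt_irrefl x h3

lemma exists_lt_of_mem_Imu {μ : Measure ℝ} {x : ℝ} (hx : x ∈ Imu μ) :
    ∃ q ∈ msupport μ, q < x := by
  by_contra h
  push_neg at h
  have hsub : msupport μ ⊆ Set.Ici x := fun q hq => h q hq
  have h2 : convexHull ℝ (msupport μ) ⊆ Set.Ici x := convexHull_min hsub (convex_Ici x)
  have h3 := interior_mono h2 hx
  rw [interior_Ici] at h3
  exact lt_irrefl x h3

end Helpers

/-- Remark 2.2, Bijections: if the support of `μ` contains at least two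
points, then for each `t > 0` the posterior mean `y ↦ G(t,y)` is a strictly increasing
continuous bijection from `ℝ` onto `I_μ`. -/
theorem posterior_mean_bijection
    (μ : Measure ℝ) [IsProbabilityMeasure μ] (hμ2 : Integrable (fun u => u ^ 2) μ)
    (htwo : ∃ a b : ℝ, a ∈ msupport μ ∧ b ∈ msupport μ ∧ a ≠ b)
    (t : ℝ) (ht : 0 < t) :
    StrictMono (Gp μ t) ∧ Continuous (Gp μ t) ∧
      Set.BijOn (Gp μ t) Set.univ (Imu μ) := by
  obtain ⟨a₀, b₀, ha₀, hb₀, hne⟩ := htwo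
  obtain ⟨a, b, ha, hb, hab⟩ : ∃ a b : ℝ, a ∈ msupport μ ∧ b ∈ msupport μ ∧ a < b := by
    rcases hne.lt_or_gt with h | h
    exacts [⟨a₀, b₀, ha₀, hb₀, h⟩, ⟨b₀, a₀, hb₀, ha₀, h⟩]
  have hμ1 : Integrable (fun u => |u|) μ := by
    apply (hμ2.add (integrable_const 1)).mono' continuous_abs.aestronglyMeasurable
    apply Filter.Eventually.of_forall
    intro u
    rw [Real.norm_eq_abs, abs_abs]
    simp only [Pi.add_apply]
    nlinarith [sq_nonneg (|u| - 1), sq_abs u]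
  have hmono : StrictMono (Gp μ t) := Gp_strictMono ht ha hb hab
  have hcont : Continuous (Gp μ t) := Gp_continuous ht
  refine ⟨hmono, hcont, ?_, ?_, ?_⟩
  · intro y _
    obtain ⟨q, hq, hq'⟩ := exists_msupport_gt_Gp ht ha hb hab y
    obtain ⟨p, hp, hp'⟩ := exists_msupport_lt_Gp ht ha hb hab y
    exact mem_Imu_of_between hp hq hp' hq'
  · exact fun y₁ _ y₂ _ h => hmono.injective h
  · intro x hx
    obtain ⟨q, hq, hxq⟩ := exists_gt_of_mem_Imu hx
    obtain ⟨p, hp, hpx⟩ := exists_lt_of_mem_Imu hx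
    obtain ⟨y₂, hy₂⟩ := exists_Gp_gt ht hμ1 hq hxq
    obtain ⟨y₁, hy₁⟩ := exists_Gp_lt ht hμ1 hp hpx
    have hyy : y₁ < y₂ := hmono.lt_iff_lt.1 (hy₁.trans hy₂)
    obtain ⟨y, _, hy⟩ := intermediate_value_Ioo hyy.le hcont.continuousOn ⟨hy₁, hy₂⟩
    exact ⟨y, Set.mem_univ y, hy⟩
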